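/- If the truncated mean function ℓ(x) = ∫₀ˣ (1 - F(t)) dt of a nonnegative random variable X is slowly varying at infinity and E[X] = ∞, then ∫₀ˣ t dF(t) ∼ ℓ(x) as x → ∞, i.e., E[X; X ≤ x] / ℓ(x) → 1. -/

import Mathlib

open MeasureTheory Filter Set Asymptotics Topology

/-- Tail of a distribution: `P[X > x]`. -/
noncomputable def tailF (μ : Measure ℝ) (x : ℝ) : ℝ := (μ (Set.Ioi x)).toReal

/-- Truncated mean `ℓ(x) = ∫₀ˣ (1 - F(t)) dt`. -/
noncomputable def ell (μ : Measure ℝ) (x : ℝ) : ℝ := ∫ t in (0:ℝ)..x, tailF μ t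

/-- A function is slowly varying at infinity. -/
def SlowlyVarying (f : ℝ → ℝ) : Prop :=
  (∀ᶠ x in atTop, 0 < f x) ∧
    ∀ c : ℝ, 1 < c → Tendsto (fun x => f (c * x) / f x) atTop (𝓝 1)



section aux
variable (μ : Measure ℝ) [IsProbabilityMeasure μ]

lemma tailF_anti : Antitone (tailF μ) := fun _ _ hab =>
  ENNReal.toReal_mono (measure_ne_top μ _) (measure_mono (Ioi_subset_Ioi hab))

omit [IsProbabilityMeasure μ] in
lemma tailF_nonneg (x : ℝ) : 0 ≤ tailF μ x := ENNReal.toReal_nonneg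

lemma tailF_intInt (a b : ℝ) : IntervalIntegrable (tailF μ) volume a b :=
  (tailF_anti μ).intervalIntegrable

omit [IsProbabilityMeasure μ] in
lemma meas_Ioi_meas : Measurable (fun t : ℝ => μ (Set.Ioi t)) :=
  Antitone.measurable (fun _ _ hab => measure_mono (Ioi_subset_Ioi hab))

lemma key_identity (hnn : μ (Iio 0) = 0) {x : ℝ} (hx : 0 ≤ x) :
    ∫ t in Icc 0 x, t ∂μ + x * tailF μ x = ell μ x := by
  have hae : ∀ᵐ a ∂μ, 0 ≤ a := by
    rw [ae_iff]; simp only [not_le]; exact hnn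
  -- layer cake for f a = min a x
  have hlc := lintegral_eq_lintegral_meas_lt μ (f := fun a => min a x)
    (hae.mono fun a ha => le_min ha hx) (aemeasurable_id.min aemeasurable_const)
  -- RHS of layer cake equals ∫⁻ t in Ioo 0 x, μ (Ioi t)
  have hrhs : ∫⁻ t in Ioi 0, μ {a : ℝ | t < min a x} = ∫⁻ t in Ioo 0 x, μ (Set.Ioi t) := by
    have h1 : ∫⁻ t in Ioi 0, μ {a : ℝ | t < min a x}
        = ∫⁻ t in Ioi 0, (Ioo 0 x).indicator (fun t => μ (Set.Ioi t)) t := by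
      refine setLIntegral_congr_fun_ae measurableSet_Ioi (ae_of_all _ fun t ht => ?_)
      by_cases htx : t < x
      · rw [indicator_of_mem (mem_Ioo.mpr ⟨ht, htx⟩)]
        congr 1
        ext a; simp [lt_min_iff, htx]
      · rw [indicator_of_notMem (fun h => htx (mem_Ioo.mp h).2)]
        have h2 : {a : ℝ | t < min a x} = ∅ :=
          Set.eq_empty_iff_forall_notMem.mpr fun a ha => htx (lt_min_iff.mp ha).2
        rw [h2]; exact measure_empty
    rw [h1, lintegral_indicator measurableSet_Ioo, Measure.restrict_restrict measurableSet_Ioo,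
      inter_eq_left.mpr Ioo_subset_Ioi_self]
  -- LHS of layer cake splits
  have hlhs : ∫⁻ a, ENNReal.ofReal (min a x) ∂μ
      = (∫⁻ a in Iic x, ENNReal.ofReal a ∂μ) + ENNReal.ofReal x * μ (Set.Ioi x) := by
    have hs := lintegral_add_compl (μ := μ) (f := fun a => ENNReal.ofReal (min a x))
      (A := Iic x) measurableSet_Iic
    rw [compl_Iic] at hs
    rw [← hs]
    congr 1
    · exact setLIntegral_congr_fun_ae measurableSet_Iic
        (ae_of_all _ fun a ha => by rw [min_eq_left ha])
    · rw [setLIntegral_congr_fun_ae measurableSet_Ioi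
          (ae_of_all _ fun a (ha : x < a) => by rw [min_eq_right ha.le]),
        setLIntegral_const]
  -- finiteness
  have hAfin : ∫⁻ a in Iic x, ENNReal.ofReal a ∂μ ≠ ⊤ := by
    refine ne_top_of_le_ne_top ?_
      (setLIntegral_mono' measurableSet_Iic fun a ha => ENNReal.ofReal_le_ofReal ha)
    rw [setLIntegral_const]
    exact ENNReal.mul_ne_top ENNReal.ofReal_ne_top (measure_ne_top μ _)
  have hBfin : ENNReal.ofReal x * μ (Set.Ioi x) ≠ ⊤ :=
    ENNReal.mul_ne_top ENNReal.ofReal_ne_top (measure_ne_top μ _)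
  -- real conversions
  have h1 : ∫ t in Icc 0 x, t ∂μ = (∫⁻ a in Iic x, ENNReal.ofReal a ∂μ).toReal := by
    rw [setIntegral_congr_set (t := Iic x) ?_,
      integral_eq_lintegral_of_nonneg_ae (ae_restrict_of_ae hae)
        measurable_id.aestronglyMeasurable]
    refine (ae_eq_set.mpr ⟨?_, ?_⟩)
    · rw [diff_eq_empty.mpr Icc_subset_Iic_self]; exact measure_empty
    · refine measure_mono_null (fun a ha => ?_) hnn
      simp only [mem_diff, mem_Iic, mem_Icc, not_and, not_le] at ha
      by_contra h
      simp only [mem_Iio, not_lt] at h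
      exact absurd (ha.2 h) (not_lt.mpr ha.1)
  have h2 : x * tailF μ x = (ENNReal.ofReal x * μ (Set.Ioi x)).toReal := by
    rw [ENNReal.toReal_mul, ENNReal.toReal_ofReal hx]; rfl
  have h3 : ell μ x = (∫⁻ t in Ioo 0 x, μ (Set.Ioi t)).toReal := by
    rw [ell, intervalIntegral.integral_of_le hx,
      setLIntegral_congr (Ioo_ae_eq_Ioc (a := (0:ℝ)) (b := x))]
    simp only [tailF]
    exact integral_toReal ((meas_Ioi_meas μ).aemeasurable.restrict)
      (ae_of_all _ fun t => measure_lt_top μ _)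
  rw [h1, h2, h3, ← ENNReal.toReal_add hAfin hBfin, ← hlhs, hlc, hrhs]

end aux

section aux2
variable (μ : Measure ℝ) [IsProbabilityMeasure μ]

lemma ell_diff {a b : ℝ} (hab : a ≤ b) (hb2 : b / 2 = a) (hx : 0 ≤ b) :
    b / 2 * tailF μ b ≤ ell μ b - ell μ a := by
  have hsplit : ell μ a + ∫ t in a..b, tailF μ t = ell μ b :=
    intervalIntegral.integral_add_adjacent_intervals (tailF_intInt μ 0 a) (tailF_intInt μ a b)
  have hmono : ∫ t in a..b, (tailF μ b) ≤ ∫ t in a..b, tailF μ t := by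
    refine intervalIntegral.integral_mono_on hab intervalIntegrable_const (tailF_intInt μ a b)
      fun t ht => tailF_anti μ ht.2
  rw [intervalIntegral.integral_const, smul_eq_mul] at hmono
  have : b - a = b / 2 := by rw [← hb2]; ring
  rw [this] at hmono
  linarith

lemma tendsto_half (hsv : SlowlyVarying (ell μ)) :
    Tendsto (fun x => ell μ (x / 2) / ell μ x) atTop (𝓝 1) := by
  have h2 := (hsv.2 2 one_lt_two).comp (tendsto_id.atTop_div_const two_pos)
  have h2' : Tendsto (fun x => ell μ x / ell μ (x / 2)) atTop (𝓝 1) := by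
    refine h2.congr fun x => ?_
    simp only [Function.comp_apply, id]
    rw [mul_div_cancel₀ _ (two_ne_zero)]
  have := h2'.inv₀ one_ne_zero
  rw [inv_one] at this
  exact this.congr fun x => by rw [inv_div]

lemma tendsto_tail_frac (hsv : SlowlyVarying (ell μ)) :
    Tendsto (fun x => x * tailF μ x / ell μ x) atTop (𝓝 0) := by
  have hub : Tendsto (fun x => 2 * (1 - ell μ (x / 2) / ell μ x)) atTop (𝓝 0) := by
    have := (tendsto_const_nhds (x := (1:ℝ)).sub (tendsto_half μ hsv)).const_mul (2:ℝ)
    simpa using this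
  refine tendsto_of_tendsto_of_tendsto_of_le_of_le' tendsto_const_nhds hub ?_ ?_
  · filter_upwards [hsv.1, eventually_ge_atTop (0:ℝ)] with x hpos hx
    exact div_nonneg (mul_nonneg hx (tailF_nonneg μ x)) hpos.le
  · filter_upwards [hsv.1, eventually_ge_atTop (0:ℝ)] with x hpos hx
    have hkey := ell_diff μ (by linarith : x / 2 ≤ x) rfl hx
    have hmono : ell μ (x / 2) ≤ ell μ x := by nlinarith [tailF_nonneg μ x]
    rw [div_le_iff₀ hpos, mul_assoc]
    have h4 : (1 - ell μ (x / 2) / ell μ x) * ell μ x = ell μ x - ell μ (x / 2) := by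
      rw [sub_mul, one_mul, div_mul_cancel₀ _ hpos.ne']
    rw [h4]
    linarith

end aux2

/-- If `ℓ` is slowly varying and `E X = ∞`, then `∫₀ˣ t dF(t) ∼ ℓ(x)` as `x → ∞`. -/
theorem stmt1 (μ : Measure ℝ) [IsProbabilityMeasure μ]
    (hnn : μ (Set.Iio 0) = 0)
    (hmean : ∫⁻ x, ENNReal.ofReal |x| ∂μ = ⊤)
    (hsv : SlowlyVarying (ell μ)) :
    Tendsto (fun x => (∫ t in Set.Icc 0 x, t ∂μ) / ell μ x) atTop (𝓝 1) := by
  have hg := tendsto_tail_frac μ hsv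
  have h1 : Tendsto (fun x => 1 - x * tailF μ x / ell μ x) atTop (𝓝 1) := by
    simpa using (tendsto_const_nhds (x := (1:ℝ))).sub hg
  refine h1.congr' ?_
  filter_upwards [hsv.1, eventually_ge_atTop (0:ℝ)] with x hpos hx
  have hk := key_identity μ hnn hx
  have : ∫ t in Set.Icc 0 x, t ∂μ = ell μ x - x * tailF μ x := by linarith
  rw [this, sub_div, div_self hpos.ne']
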